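/- Let (E, F) be a resistance form on a set X whose resistance metric R is complete and such that (X,R) is doubling and uniformly perfect. Then for every η ∈ (0,1) there exists C > 0 such that C^{-1} r ≤ 𝓡(cl(B_R(x,ηr)), X∖B_R(x,r)) ≤ C r for every x ∈ X and r > 0 with B_R(x,r) ≠ X. -/

import Mathlib

open Filter Set Metric
open scoped ENNReal Topology

/-- A resistance form `(E, F)` on a set `X` (Kigami):
`F` is a linear subspace of the real-valued functions on `X`, `E` is a nonnegative
symmetric bilinear form on `F` such that (RF1) constants belong to `F` and
`E(u,u) = 0` iff `u` is constant, (RF2) the quotient of `F` by the constants is a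
Hilbert space under `E` (stated as completeness of the `E`-seminorm on `F`),
(RF3) points of `X` are separated by `F`, (RF4) for `x ≠ y` the quantity
`R(x,y) = (inf {E(u,u) : u ∈ F, u x = 1, u y = 0})⁻¹` is finite (i.e. the infimum
is positive; an admissible `u` always exists), and (RF5) the Markov property holds
for the unit truncation. -/
structure ResistanceForm (X : Type*) where
  F : Set (X → ℝ)
  E : (X → ℝ) → (X → ℝ) → ℝ
  zero_mem : (0 : X → ℝ) ∈ F
  add_mem : ∀ {u v : X → ℝ}, u ∈ F → v ∈ F → u + v ∈ F
  smul_mem : ∀ (c : ℝ) {u : X → ℝ}, u ∈ F → c • u ∈ F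
  const_mem : ∀ c : ℝ, (fun _ => c) ∈ F
  symm : ∀ u ∈ F, ∀ v ∈ F, E u v = E v u
  add_left : ∀ u ∈ F, ∀ v ∈ F, ∀ w ∈ F, E (u + v) w = E u w + E v w
  smul_left : ∀ (c : ℝ), ∀ u ∈ F, ∀ v ∈ F, E (c • u) v = c * E u v
  nonneg : ∀ u ∈ F, 0 ≤ E u u
  null_iff_const : ∀ u ∈ F, (E u u = 0 ↔ ∃ c : ℝ, ∀ x, u x = c)
  complete : ∀ u : ℕ → (X → ℝ), (∀ n, u n ∈ F) →
    (∀ ε : ℝ, 0 < ε → ∃ N : ℕ, ∀ m ≥ N, ∀ n ≥ N, E (u m - u n) (u m - u n) < ε) →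
    ∃ v ∈ F, ∀ ε : ℝ, 0 < ε → ∃ N : ℕ, ∀ n ≥ N, E (v - u n) (v - u n) < ε
  sep : ∀ x y : X, x ≠ y → ∃ u ∈ F, u x ≠ u y
  exists_unit : ∀ x y : X, x ≠ y → ∃ u ∈ F, u x = 1 ∧ u y = 0
  inf_pos : ∀ x y : X, x ≠ y →
    0 < sInf {e : ℝ | ∃ u ∈ F, u x = 1 ∧ u y = 0 ∧ E u u = e}
  markov : ∀ u ∈ F, (fun x => max 0 (min 1 (u x))) ∈ F ∧
    E (fun x => max 0 (min 1 (u x))) (fun x => max 0 (min 1 (u x))) ≤ E u u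

namespace ResistanceForm

variable {X : Type*}

open Classical in
/-- The resistance metric `R` associated with a resistance form:
`R(x,x) = 0` and `R(x,y) = (inf {E(u,u) : u ∈ F, u x = 1, u y = 0})⁻¹` for `x ≠ y`. -/
noncomputable def rmetric (rf : ResistanceForm X) (x y : X) : ℝ :=
  if x = y then 0
  else (sInf {e : ℝ | ∃ u ∈ rf.F, u x = 1 ∧ u y = 0 ∧ rf.E u u = e})⁻¹

open Classical in
/-- The resistance `𝓡(A,B)` between two sets: the reciprocal of the minimal energy of
functions that are `≡ 1` on `A` and `≡ 0` on `B` if such functions exist, `0` if no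
such function exists, and `∞` if `A` or `B` is empty. -/
noncomputable def setRes (rf : ResistanceForm X) (A B : Set X) : ℝ≥0∞ :=
  if A.Nonempty ∧ B.Nonempty then
    (if ∃ u ∈ rf.F, (∀ x ∈ A, u x = 1) ∧ (∀ x ∈ B, u x = 0) then
      (ENNReal.ofReal
        (sInf {e : ℝ | ∃ u ∈ rf.F, (∀ x ∈ A, u x = 1) ∧ (∀ x ∈ B, u x = 0) ∧ rf.E u u = e}))⁻¹
    else 0)
  else ⊤

end ResistanceForm

/-- A distance function `ρ` on `X` is doubling: there is `N ∈ ℕ` such that every ball of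
radius `2r` is covered by `N` balls of radius `r`. -/
def DoublingOf {X : Type*} (ρ : X → X → ℝ) : Prop :=
  ∃ N : ℕ, ∀ (x : X) (r : ℝ), ∃ s : Finset X, s.card ≤ N ∧
    {y : X | ρ x y < 2 * r} ⊆ ⋃ z ∈ s, {y : X | ρ z y < r}

/-- A distance function `ρ` on `X` is uniformly perfect: there is `γ > 1` such that
`B(x, γ r) \ B(x, r) ≠ ∅` whenever `B(x,r)` is not the whole space. -/
def UniformlyPerfectOf {X : Type*} (ρ : X → X → ℝ) : Prop :=
  ∃ γ : ℝ, 1 < γ ∧ ∀ (x : X) (r : ℝ), 0 < r → {y : X | ρ x y < r} ≠ Set.univ →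
    ({y : X | ρ x y < γ * r} \ {y : X | ρ x y < r}).Nonempty

section Aux

namespace ResistanceForm

variable {X : Type*} (rf : ResistanceForm X)

lemma neg_mem' {u : X → ℝ} (hu : u ∈ rf.F) : -u ∈ rf.F := by
  have h := rf.smul_mem (-1) hu
  have he : (-1 : ℝ) • u = -u := by funext w; simp
  rwa [he] at h

lemma sub_mem' {u v : X → ℝ} (hu : u ∈ rf.F) (hv : v ∈ rf.F) : u - v ∈ rf.F := by
  have h := rf.add_mem hu (rf.neg_mem' hv)
  rwa [← sub_eq_add_neg] at h

lemma E_add_right {u v w : X → ℝ} (hu : u ∈ rf.F) (hv : v ∈ rf.F) (hw : w ∈ rf.F) :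
    rf.E u (v + w) = rf.E u v + rf.E u w := by
  rw [rf.symm u hu (v + w) (rf.add_mem hv hw), rf.add_left v hv w hw u hu,
    rf.symm v hv u hu, rf.symm w hw u hu]

lemma E_smul_right (c : ℝ) {u v : X → ℝ} (hu : u ∈ rf.F) (hv : v ∈ rf.F) :
    rf.E u (c • v) = c * rf.E u v := by
  rw [rf.symm u hu (c • v) (rf.smul_mem c hv), rf.smul_left c v hv u hu, rf.symm v hv u hu]

lemma E_expand {u v : X → ℝ} (hu : u ∈ rf.F) (hv : v ∈ rf.F) :
    rf.E (u + v) (u + v) = rf.E u u + 2 * rf.E u v + rf.E v v := by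
  rw [rf.add_left u hu v hv (u + v) (rf.add_mem hu hv), rf.E_add_right hu hu hv,
    rf.E_add_right hv hu hv, rf.symm v hv u hu]
  ring

lemma E_smul_self (c : ℝ) {u : X → ℝ} (hu : u ∈ rf.F) :
    rf.E (c • u) (c • u) = c ^ 2 * rf.E u u := by
  rw [rf.smul_left c u hu (c • u) (rf.smul_mem c hu), rf.E_smul_right c hu hu]
  ring

lemma E_sq_le {u v : X → ℝ} (hu : u ∈ rf.F) (hv : v ∈ rf.F) :
    (rf.E u v) ^ 2 ≤ rf.E u u * rf.E v v := by
  have key : ∀ t : ℝ, 0 ≤ rf.E v v * (t * t) + (2 * rf.E u v) * t + rf.E u u := by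
    intro t
    have h := rf.nonneg _ (rf.add_mem hu (rf.smul_mem t hv))
    rw [rf.E_expand hu (rf.smul_mem t hv), rf.E_smul_right t hu hv,
      rf.E_smul_self t hv] at h
    nlinarith [h]
  have hd := discrim_le_zero key
  rw [discrim] at hd
  nlinarith [hd]

lemma abs_E_le {u v : X → ℝ} (hu : u ∈ rf.F) (hv : v ∈ rf.F) :
    |rf.E u v| ≤ Real.sqrt (rf.E u u) * Real.sqrt (rf.E v v) := by
  rw [← Real.sqrt_mul (rf.nonneg u hu)]
  exact Real.abs_le_sqrt (rf.E_sq_le hu hv)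

lemma sqrt_E_add_le {u v : X → ℝ} (hu : u ∈ rf.F) (hv : v ∈ rf.F) :
    Real.sqrt (rf.E (u + v) (u + v)) ≤ Real.sqrt (rf.E u u) + Real.sqrt (rf.E v v) := by
  have h1 : rf.E (u + v) (u + v) ≤ (Real.sqrt (rf.E u u) + Real.sqrt (rf.E v v)) ^ 2 := by
    rw [rf.E_expand hu hv]
    have h2 : rf.E u v ≤ Real.sqrt (rf.E u u) * Real.sqrt (rf.E v v) :=
      (abs_le.1 (rf.abs_E_le hu hv)).2
    have h3 := Real.sq_sqrt (rf.nonneg u hu)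
    have h4 := Real.sq_sqrt (rf.nonneg v hv)
    nlinarith
  calc Real.sqrt (rf.E (u + v) (u + v))
      ≤ Real.sqrt ((Real.sqrt (rf.E u u) + Real.sqrt (rf.E v v)) ^ 2) := Real.sqrt_le_sqrt h1
    _ = Real.sqrt (rf.E u u) + Real.sqrt (rf.E v v) := Real.sqrt_sq (by positivity)

lemma E_const_self (c : ℝ) : rf.E (fun _ => c) (fun _ => c) = 0 :=
  (rf.null_iff_const _ (rf.const_mem c)).2 ⟨c, fun _ => rfl⟩

lemma E_const_left (c : ℝ) {v : X → ℝ} (hv : v ∈ rf.F) : rf.E (fun _ => c) v = 0 := by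
  have h := rf.E_sq_le (rf.const_mem c) hv
  rw [rf.E_const_self c] at h
  nlinarith [h]

lemma E_add_const {u : X → ℝ} (hu : u ∈ rf.F) (c : ℝ) :
    rf.E (u + fun _ => c) (u + fun _ => c) = rf.E u u := by
  rw [rf.E_expand hu (rf.const_mem c), rf.E_const_self c,
    rf.symm u hu _ (rf.const_mem c), rf.E_const_left c hu]
  ring

lemma sum_mem_and_sqrt {ι : Type*} (s : Finset ι) (f : ι → X → ℝ) (hf : ∀ i ∈ s, f i ∈ rf.F) :
    (∑ i ∈ s, f i) ∈ rf.F ∧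
      Real.sqrt (rf.E (∑ i ∈ s, f i) (∑ i ∈ s, f i)) ≤
        ∑ i ∈ s, Real.sqrt (rf.E (f i) (f i)) := by
  classical
  induction s using Finset.induction_on with
  | empty => simpa using ⟨rf.zero_mem, by rw [show rf.E 0 0 = 0 from (rf.null_iff_const 0 rf.zero_mem).2 ⟨0, fun _ => rfl⟩]; simp⟩
  | insert _ _ hx ih =>
    rename_i a t
    have hfa : f a ∈ rf.F := hf a (Finset.mem_insert_self a t)
    have hft : ∀ i ∈ t, f i ∈ rf.F := fun i hi => hf i (Finset.mem_insert_of_mem hi)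
    obtain ⟨hmem, hsq⟩ := ih hft
    rw [Finset.sum_insert hx, Finset.sum_insert hx]
    refine ⟨rf.add_mem hfa hmem, ?_⟩
    calc Real.sqrt (rf.E (f a + ∑ i ∈ t, f i) (f a + ∑ i ∈ t, f i))
        ≤ Real.sqrt (rf.E (f a) (f a)) + Real.sqrt (rf.E (∑ i ∈ t, f i) (∑ i ∈ t, f i)) :=
          rf.sqrt_E_add_le hfa hmem
      _ ≤ _ := by linarith

end ResistanceForm

end Aux
section Aux2

namespace ResistanceForm

variable {X : Type*} [MetricSpace X] (rf : ResistanceForm X)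

/-- The admissible energy set for a pair of points. -/
def pairSet (x y : X) : Set ℝ :=
  {e : ℝ | ∃ u ∈ rf.F, u x = 1 ∧ u y = 0 ∧ rf.E u u = e}

lemma pairSet_bddBelow (x y : X) : BddBelow (rf.pairSet x y) := by
  refine ⟨0, fun e he => ?_⟩
  obtain ⟨u, hu, -, -, hE⟩ := he
  exact hE ▸ rf.nonneg u hu

lemma pairSet_nonempty {x y : X} (h : x ≠ y) : (rf.pairSet x y).Nonempty := by
  obtain ⟨u, hu, h1, h0⟩ := rf.exists_unit x y h
  exact ⟨rf.E u u, u, hu, h1, h0, rfl⟩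

lemma sInf_pairSet_eq (hR : ∀ x y : X, dist x y = rf.rmetric x y) {x y : X} (h : x ≠ y) :
    sInf (rf.pairSet x y) = (dist x y)⁻¹ := by
  have hpos := rf.inf_pos x y h
  have : dist x y = (sInf (rf.pairSet x y))⁻¹ := by
    rw [hR x y, rmetric, if_neg h]; rfl
  rw [this, inv_inv]

lemma holder (hR : ∀ x y : X, dist x y = rf.rmetric x y) {u : X → ℝ} (hu : u ∈ rf.F)
    (z w : X) : (u z - u w) ^ 2 ≤ dist z w * rf.E u u := by
  rcases eq_or_ne z w with rfl | hzw
  · simp [rf.nonneg u hu]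
  rcases eq_or_ne (u z) (u w) with he | he
  · simp only [he, sub_self]
    have h1 := rf.nonneg u hu
    have h2 := dist_nonneg (x := z) (y := w)
    nlinarith
  · set Δ : ℝ := u z - u w with hΔ
    have hΔ0 : Δ ≠ 0 := sub_ne_zero.2 he
    set v : X → ℝ := Δ⁻¹ • (u + fun _ => -u w) with hv
    have hvF : v ∈ rf.F := rf.smul_mem _ (rf.add_mem hu (rf.const_mem _))
    have hvz : v z = 1 := by
      simp only [hv, Pi.smul_apply, Pi.add_apply, smul_eq_mul]
      field_simp
      ring
    have hvw : v w = 0 := by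
      simp only [hv, Pi.smul_apply, Pi.add_apply, smul_eq_mul]
      ring
    have hEv : rf.E v v = Δ⁻¹ ^ 2 * rf.E u u := by
      rw [hv, rf.E_smul_self _ (rf.add_mem hu (rf.const_mem _)), rf.E_add_const hu]
    have hmem : rf.E v v ∈ rf.pairSet z w := ⟨v, hvF, hvz, hvw, rfl⟩
    have hle : sInf (rf.pairSet z w) ≤ rf.E v v := csInf_le (rf.pairSet_bddBelow z w) hmem
    rw [rf.sInf_pairSet_eq hR hzw, hEv] at hle
    have hd : 0 < dist z w := dist_pos.2 hzw
    have hΔsq : 0 < Δ ^ 2 := by positivity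
    rw [inv_le_iff_one_le_mul₀ hd] at hle
    have h2 : 1 ≤ dist z w * (Δ⁻¹ ^ 2 * rf.E u u) := by linarith [hle, mul_comm (Δ⁻¹ ^ 2 * rf.E u u) (dist z w)]
    have h3 : Δ ^ 2 ≤ Δ ^ 2 * (dist z w * (Δ⁻¹ ^ 2 * rf.E u u)) := by nlinarith
    calc Δ ^ 2 ≤ Δ ^ 2 * (dist z w * (Δ⁻¹ ^ 2 * rf.E u u)) := h3
      _ = (Δ ^ 2 * Δ⁻¹ ^ 2) * (dist z w * rf.E u u) := by ring
      _ = dist z w * rf.E u u := by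
          rw [← mul_pow, mul_inv_cancel₀ hΔ0]; ring_nf

/-- A `[0,1]`-valued potential between a point `z` and a base point `y`, with energy at most
`2 / dist y z`. -/
lemma pair_potential' (hR : ∀ x y : X, dist x y = rf.rmetric x y) (y : X) (z : X) :
    ∃ u : X → ℝ, u ∈ rf.F ∧ (∀ w, 0 ≤ u w ∧ u w ≤ 1) ∧ u y = 0 ∧
      (z ≠ y → (u z = 1 ∧ rf.E u u ≤ 2 / dist y z)) := by
  rcases eq_or_ne z y with rfl | hzy
  · exact ⟨0, rf.zero_mem, by intro w; simp, rfl, by simp⟩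
  · have hne := rf.pairSet_nonempty (x := z) (y := y) hzy
    have hbdd := rf.pairSet_bddBelow z y
    have hinf : sInf (rf.pairSet z y) = (dist z y)⁻¹ := rf.sInf_pairSet_eq hR hzy
    have hdpos : 0 < dist z y := dist_pos.2 hzy
    have hlt : sInf (rf.pairSet z y) < 2 / dist y z := by
      rw [hinf, dist_comm y z]
      rw [div_eq_mul_inv]
      nlinarith [inv_pos.2 hdpos]
    obtain ⟨e, he, helt⟩ := (csInf_lt_iff hbdd hne).1 hlt
    obtain ⟨u, hu, huz, huy, hEu⟩ := he
    obtain ⟨htF, htE⟩ := rf.markov u hu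
    refine ⟨fun x => max 0 (min 1 (u x)), htF, ?_, ?_, fun _ => ⟨?_, ?_⟩⟩
    · intro w
      constructor
      · exact le_max_left _ _
      · have : min 1 (u w) ≤ 1 := min_le_left _ _
        simp only [max_le_iff]
        exact ⟨zero_le_one, this⟩
    · show max 0 (min 1 (u y)) = 0
      rw [huy]; norm_num
    · show max 0 (min 1 (u z)) = 1
      rw [huz]; norm_num
    · calc rf.E _ _ ≤ rf.E u u := htE
        _ = e := hEu
        _ ≤ 2 / dist y z := le_of_lt helt

end ResistanceForm

end Aux2
section Aux3

variable {X : Type*} [MetricSpace X]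

lemma iterate_cover {N : ℕ}
    (hN : ∀ (x : X) (r : ℝ), ∃ s : Finset X, s.card ≤ N ∧
      {y : X | dist x y < 2 * r} ⊆ ⋃ z ∈ s, {y : X | dist z y < r}) (m : ℕ) :
    ∀ (x : X) (r : ℝ), ∃ s : Finset X, s.card ≤ N ^ m ∧
      Metric.ball x (2 ^ m * r) ⊆ ⋃ z ∈ s, Metric.ball z r := by
  classical
  induction m with
  | zero =>
    intro x r
    refine ⟨{x}, by simp, ?_⟩
    intro y hy
    simp only [Finset.mem_singleton, Set.mem_iUnion]
    exact ⟨x, rfl, by simpa using hy⟩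
  | succ m ih =>
    intro x r
    obtain ⟨s, hcard, hcov⟩ := ih x (2 * r)
    choose t ht1 ht2 using fun z : X => hN z r
    refine ⟨s.biUnion t, ?_, ?_⟩
    · calc (s.biUnion t).card ≤ ∑ z ∈ s, (t z).card := Finset.card_biUnion_le
        _ ≤ ∑ _z ∈ s, N := Finset.sum_le_sum fun z _ => ht1 z
        _ = s.card * N := by rw [Finset.sum_const, smul_eq_mul]
        _ ≤ N ^ m * N := Nat.mul_le_mul_right N hcard
        _ = N ^ (m + 1) := by ring
    · intro y hy
      have hy' : y ∈ Metric.ball x (2 ^ m * (2 * r)) := by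
        have : (2 : ℝ) ^ (m + 1) * r = 2 ^ m * (2 * r) := by ring
        rwa [this] at hy
      obtain ⟨z, hz, hyz⟩ := by simpa only [Set.mem_iUnion, exists_prop] using hcov hy'
      have hyz' : y ∈ {w : X | dist z w < 2 * r} := by
        rw [Set.mem_setOf_eq, dist_comm]
        exact Metric.mem_ball.1 hyz
      obtain ⟨p, hp, hyp⟩ := by simpa only [Set.mem_iUnion, exists_prop] using ht2 z hyz'
      simp only [Set.mem_iUnion, exists_prop]
      exact ⟨p, Finset.mem_biUnion.2 ⟨z, hz, hp⟩, Metric.mem_ball.2 (by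
        rw [dist_comm]; exact hyp)⟩

lemma doubling_cover {N : ℕ}
    (hN : ∀ (x : X) (r : ℝ), ∃ s : Finset X, s.card ≤ N ∧
      {y : X | dist x y < 2 * r} ⊆ ⋃ z ∈ s, {y : X | dist z y < r}) (m : ℕ)
    (c : X) (ρ : ℝ) (T : Set X) (hT : T ⊆ Metric.ball c (2 ^ m * ρ)) :
    ∃ P : Finset X, ↑P ⊆ T ∧ P.card ≤ N ^ m ∧ T ⊆ ⋃ p ∈ P, Metric.ball p (2 * ρ) := by
  classical
  obtain ⟨s, hcard, hcov⟩ := iterate_cover hN m c ρ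
  have hsel : ∀ z : X, ∃ p : X, (T ∩ Metric.ball z ρ).Nonempty → p ∈ T ∩ Metric.ball z ρ := by
    intro z
    by_cases h : (T ∩ Metric.ball z ρ).Nonempty
    · exact ⟨h.choose, fun _ => h.choose_spec⟩
    · exact ⟨c, fun h' => absurd h' h⟩
  choose sel hsel using hsel
  refine ⟨(s.filter fun z => (T ∩ Metric.ball z ρ).Nonempty).image sel, ?_, ?_, ?_⟩
  · intro p hp
    simp only [Finset.coe_image, Set.mem_image, Finset.coe_filter, Set.mem_setOf_eq] at hp
    obtain ⟨z, ⟨_, hnon⟩, rfl⟩ := hp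
    exact ((hsel z hnon).1)
  · calc _ ≤ (s.filter fun z => (T ∩ Metric.ball z ρ).Nonempty).card := Finset.card_image_le
      _ ≤ s.card := Finset.card_filter_le _ _
      _ ≤ N ^ m := hcard
  · intro y hy
    obtain ⟨z, hz, hyz⟩ := by
      simpa only [Set.mem_iUnion, exists_prop] using hcov (hT hy)
    have hnon : (T ∩ Metric.ball z ρ).Nonempty := ⟨y, hy, hyz⟩
    obtain ⟨hpT, hpz⟩ := hsel z hnon
    simp only [Set.mem_iUnion, exists_prop, Finset.mem_image, Finset.mem_filter]
    refine ⟨sel z, ⟨z, ⟨hz, hnon⟩, rfl⟩, ?_⟩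
    rw [Metric.mem_ball] at hyz hpz ⊢
    calc dist y (sel z) ≤ dist y z + dist z (sel z) := dist_triangle _ _ _
      _ < ρ + ρ := by rw [dist_comm z (sel z)] at *; exact add_lt_add hyz hpz
      _ = 2 * ρ := by ring

lemma exists_dyadic {s d : ℝ} (hs : 0 < s) (hd : s ≤ d) :
    ∃ k : ℕ, 2 ^ k * s ≤ d ∧ d < 2 ^ (k + 1) * s := by
  have hex : ∃ n : ℕ, d < 2 ^ n * s := by
    obtain ⟨n, hn⟩ := pow_unbounded_of_one_lt (d / s) (by norm_num : (1:ℝ) < 2)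
    exact ⟨n, by rwa [div_lt_iff₀ hs] at hn⟩
  classical
  let n₀ := Nat.find hex
  have hn₀ : d < 2 ^ n₀ * s := Nat.find_spec hex
  have hne : n₀ ≠ 0 := by
    intro h
    rw [h] at hn₀
    simp only [pow_zero, one_mul] at hn₀
    linarith
  obtain ⟨k, hkk⟩ := Nat.exists_eq_succ_of_ne_zero hne
  have hk : ¬ d < 2 ^ k * s := Nat.find_min hex (by omega)
  refine ⟨k, not_lt.1 hk, ?_⟩
  have : k + 1 = n₀ := hkk.symm
  rw [this]
  exact hn₀

end Aux3
section Aux4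

namespace ResistanceForm

variable {X : Type*} [MetricSpace X] (rf : ResistanceForm X)

lemma sum_limit (hR : ∀ x y : X, dist x y = rf.rmetric x y)
    (q : ℕ → X → ℝ) (hqF : ∀ n, q n ∈ rf.F) (y0 : X) (hq0 : ∀ n, q n y0 = 0)
    (a : ℕ → ℝ) (ha0 : ∀ n, 0 ≤ a n)
    (ha : ∀ n, Real.sqrt (rf.E (q n) (q n)) ≤ a n) (hs : Summable a) :
    ∃ Q : X → ℝ, Q ∈ rf.F ∧ Q y0 = 0 ∧
      (∀ w, Filter.Tendsto (fun n => ∑ i ∈ Finset.range n, q i w) Filter.atTop (nhds (Q w))) ∧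
      Real.sqrt (rf.E Q Q) ≤ ∑' i, a i := by
  classical
  set S : ℕ → X → ℝ := fun n => ∑ i ∈ Finset.range n, q i with hS
  have hSF : ∀ n, S n ∈ rf.F := fun n =>
    (rf.sum_mem_and_sqrt (Finset.range n) q (fun i _ => hqF i)).1
  have hSsqrt : ∀ n, Real.sqrt (rf.E (S n) (S n)) ≤ ∑ i ∈ Finset.range n, a i := by
    intro n
    calc Real.sqrt (rf.E (S n) (S n)) ≤ ∑ i ∈ Finset.range n, Real.sqrt (rf.E (q i) (q i)) :=
        (rf.sum_mem_and_sqrt (Finset.range n) q (fun i _ => hqF i)).2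
      _ ≤ ∑ i ∈ Finset.range n, a i := Finset.sum_le_sum fun i _ => ha i
  -- difference of partial sums
  have hdiff : ∀ m n : ℕ, n ≤ m → Real.sqrt (rf.E (S m - S n) (S m - S n)) ≤
      ∑ i ∈ Finset.Ico n m, a i := by
    intro m n hnm
    have hSd : S m - S n = ∑ i ∈ Finset.Ico n m, q i := by
      rw [hS]
      simp only
      rw [Finset.sum_Ico_eq_sub _ hnm]
    rw [hSd]
    calc Real.sqrt _ ≤ ∑ i ∈ Finset.Ico n m, Real.sqrt (rf.E (q i) (q i)) :=
        (rf.sum_mem_and_sqrt (Finset.Ico n m) q (fun i _ => hqF i)).2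
      _ ≤ _ := Finset.sum_le_sum fun i _ => ha i
  -- Cauchy-ness of partial sums of a
  have hacauchy : CauchySeq (fun n => ∑ i ∈ Finset.range n, a i) := hs.hasSum.tendsto_sum_nat.cauchySeq
  have hcauchy : ∀ ε : ℝ, 0 < ε → ∃ N : ℕ, ∀ m ≥ N, ∀ n ≥ N,
      rf.E (S m - S n) (S m - S n) < ε := by
    intro ε hε
    have hsq : 0 < Real.sqrt ε := Real.sqrt_pos.2 hε
    obtain ⟨N, hN⟩ := Metric.cauchySeq_iff'.1 hacauchy (Real.sqrt ε / 2) (by positivity)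
    refine ⟨N, ?_⟩
    have key : ∀ m n, N ≤ n → n ≤ m → rf.E (S m - S n) (S m - S n) < ε := by
      intro m n hNn hnm
      have h1 : ∑ i ∈ Finset.Ico n m, a i < Real.sqrt ε := by
        have e1 : ∑ i ∈ Finset.Ico n m, a i =
            (∑ i ∈ Finset.range m, a i) - ∑ i ∈ Finset.range n, a i :=
          (Finset.sum_Ico_eq_sub _ hnm)
        have h2 := hN m (le_trans hNn hnm)
        have h3 := hN n hNn
        rw [Real.dist_eq] at h2 h3
        rw [e1]
        have := abs_sub_abs_le_abs_sub (∑ i ∈ Finset.range m, a i) (∑ i ∈ Finset.range n, a i)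
        calc (∑ i ∈ Finset.range m, a i) - ∑ i ∈ Finset.range n, a i
            = ((∑ i ∈ Finset.range m, a i) - (∑ i ∈ Finset.range N, a i))
              + ((∑ i ∈ Finset.range N, a i) - ∑ i ∈ Finset.range n, a i) := by ring
          _ ≤ |(∑ i ∈ Finset.range m, a i) - (∑ i ∈ Finset.range N, a i)|
              + |(∑ i ∈ Finset.range N, a i) - (∑ i ∈ Finset.range n, a i)| := by
                exact add_le_add (le_abs_self _) (le_abs_self _)
          _ < Real.sqrt ε / 2 + Real.sqrt ε / 2 :=
                add_lt_add h2 (by rw [abs_sub_comm]; exact h3)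
          _ = Real.sqrt ε := by ring
      have h4 : Real.sqrt (rf.E (S m - S n) (S m - S n)) < Real.sqrt ε :=
        lt_of_le_of_lt (hdiff m n hnm) h1
      have h5 : 0 ≤ rf.E (S m - S n) (S m - S n) :=
        rf.nonneg _ (rf.sub_mem' (hSF m) (hSF n))
      nlinarith [Real.sq_sqrt h5, Real.sqrt_nonneg (rf.E (S m - S n) (S m - S n)),
        Real.sq_sqrt hε.le, Real.sqrt_nonneg ε]
    intro m hm n hn
    rcases le_total n m with h | h
    · exact key m n hn h
    · have := key n m hm h
      have heq : rf.E (S m - S n) (S m - S n) = rf.E (S n - S m) (S n - S m) := by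
        have he2 : S m - S n = (-1 : ℝ) • (S n - S m) := by
          funext w
          simp only [Pi.sub_apply, Pi.smul_apply, smul_eq_mul]
          ring
        rw [he2, rf.E_smul_self (-1) (rf.sub_mem' (hSF n) (hSF m))]
        ring_nf
      rw [heq]
      exact this
  obtain ⟨v, hvF, hv⟩ := rf.complete S hSF hcauchy
  set Q : X → ℝ := fun w => v w - v y0 with hQ
  have hQF : Q ∈ rf.F := by
    have : Q = v + fun _ => -v y0 := by funext w; simp [hQ]; ring
    rw [this]
    exact rf.add_mem hvF (rf.const_mem _)
  have hQ0 : Q y0 = 0 := by simp [hQ]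
  have hEdiff : ∀ n, rf.E (Q - S n) (Q - S n) = rf.E (v - S n) (v - S n) := by
    intro n
    have heq : Q - S n = (v - S n) + fun _ => -v y0 := by funext w; simp [hQ]; ring
    rw [heq, rf.E_add_const (rf.sub_mem' hvF (hSF n))]
  have hQS : ∀ ε : ℝ, 0 < ε → ∃ N, ∀ n ≥ N, rf.E (Q - S n) (Q - S n) < ε := by
    intro ε hε
    obtain ⟨N, hN⟩ := hv ε hε
    exact ⟨N, fun n hn => by rw [hEdiff n]; exact hN n hn⟩
  refine ⟨Q, hQF, hQ0, ?_, ?_⟩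
  · intro w
    rw [Metric.tendsto_atTop]
    intro ε hε
    set D : ℝ := dist w y0 + 1 with hD
    have hDpos : 0 < D := by have := dist_nonneg (x := w) (y := y0); linarith
    obtain ⟨N, hN⟩ := hQS (ε ^ 2 / D) (by positivity)
    refine ⟨N, fun n hn => ?_⟩
    have hg : Q - S n ∈ rf.F := rf.sub_mem' hQF (hSF n)
    have hgy0 : (Q - S n) y0 = 0 := by
      simp only [Pi.sub_apply, hQ0]
      rw [hS]
      simp only
      rw [Finset.sum_apply]
      rw [Finset.sum_eq_zero (fun i _ => hq0 i)]
      ring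
    have hhold := rf.holder hR hg w y0
    rw [hgy0, sub_zero] at hhold
    have h2 : ((Q - S n) w) ^ 2 ≤ dist w y0 * (ε ^ 2 / D) := by
      calc ((Q - S n) w) ^ 2 ≤ dist w y0 * rf.E (Q - S n) (Q - S n) := hhold
        _ ≤ dist w y0 * (ε ^ 2 / D) := by
            apply mul_le_mul_of_nonneg_left (le_of_lt (hN n hn)) dist_nonneg
    have h3 : ((Q - S n) w) ^ 2 < ε ^ 2 := by
      have hlt : dist w y0 * (ε ^ 2 / D) < ε ^ 2 := by
        rw [hD, mul_div_assoc', div_lt_iff₀ (by positivity : (0:ℝ) < dist w y0 + 1)]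
        nlinarith [dist_nonneg (x := w) (y := y0), sq_nonneg ε, hε]
      exact lt_of_le_of_lt h2 hlt
    rw [Real.dist_eq]
    have h6 := abs_lt_of_sq_lt_sq' h3 hε.le
    have habs : |(Q - S n) w| < ε := abs_lt.2 ⟨h6.1, h6.2⟩
    have hSnw : S n w = ∑ i ∈ Finset.range n, q i w := by
      rw [hS]
      exact Finset.sum_apply _ _ _
    rw [show (Q - S n) w = Q w - S n w from rfl, hSnw, abs_sub_comm] at habs
    exact habs
  · -- energy bound
    have key : ∀ δ : ℝ, 0 < δ → Real.sqrt (rf.E Q Q) ≤ ∑' i, a i + δ := by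
      intro δ hδ
      obtain ⟨N, hN⟩ := hQS (δ ^ 2) (by positivity)
      have h1 : Real.sqrt (rf.E (Q - S N) (Q - S N)) ≤ δ := by
        have := hN N le_rfl
        have h0 : 0 ≤ rf.E (Q - S N) (Q - S N) := rf.nonneg _ (rf.sub_mem' hQF (hSF N))
        rw [show δ = Real.sqrt (δ ^ 2) from (Real.sqrt_sq hδ.le).symm]
        exact Real.sqrt_le_sqrt this.le
      have h2 : Q = (Q - S N) + S N := by funext w; simp
      calc Real.sqrt (rf.E Q Q)
          = Real.sqrt (rf.E ((Q - S N) + S N) ((Q - S N) + S N)) := by rw [← h2]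
        _ ≤ Real.sqrt (rf.E (Q - S N) (Q - S N)) + Real.sqrt (rf.E (S N) (S N)) :=
            rf.sqrt_E_add_le (rf.sub_mem' hQF (hSF N)) (hSF N)
        _ ≤ δ + ∑ i ∈ Finset.range N, a i := add_le_add h1 (hSsqrt N)
        _ ≤ δ + ∑' i, a i := by
            have := Summable.sum_le_tsum (Finset.range N) (fun i _ => ha0 i) hs
            linarith
        _ = ∑' i, a i + δ := by ring
    by_contra hcon
    push_neg at hcon
    have : ∃ δ : ℝ, 0 < δ ∧ ∑' i, a i + δ < Real.sqrt (rf.E Q Q) := by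
      refine ⟨(Real.sqrt (rf.E Q Q) - ∑' i, a i) / 2, by linarith, by linarith⟩
    obtain ⟨δ, hδ, hlt⟩ := this
    exact absurd (key δ hδ) (not_le.2 hlt)

end ResistanceForm

end Aux4
section Aux5

namespace ResistanceForm

variable {X : Type*} [MetricSpace X] (rf : ResistanceForm X)

lemma exists_cutoff (hR : ∀ x y : X, dist x y = rf.rmetric x y)
    {N : ℕ} (hN : ∀ (x : X) (r : ℝ), ∃ s : Finset X, s.card ≤ N ∧
      {y : X | dist x y < 2 * r} ⊆ ⋃ z ∈ s, {y : X | dist z y < r}) :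
    ∃ η₀ C₀ : ℝ, 0 < η₀ ∧ η₀ < 1 ∧ 0 < C₀ ∧
      ∀ (y : X) (s : ℝ), 0 < s → ∃ ψ ∈ rf.F,
        (∀ w, 0 ≤ ψ w ∧ ψ w ≤ 1) ∧ (∀ w, dist y w ≤ η₀ * s → ψ w = 1) ∧
        (∀ w, s ≤ dist y w → ψ w = 0) ∧ rf.E ψ ψ ≤ C₀ / s := by
  classical
  set M : ℝ := max ((N : ℝ) ^ 7) 1 with hM
  have hM1 : 1 ≤ M := le_max_right _ _
  have hM0 : 0 < M := lt_of_lt_of_le one_pos hM1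
  set η₀ : ℝ := (24 * M)⁻¹ ^ 2 with hη₀
  have hη₀pos : 0 < η₀ := by positivity
  have hη₀lt1 : η₀ < 1 := by
    have h24 : (24 : ℝ) ≤ 24 * M := by nlinarith
    have h1 : (24 * M)⁻¹ ≤ 24⁻¹ := inv_anti₀ (by norm_num) h24
    have h2 : 0 ≤ (24 * M)⁻¹ := by positivity
    nlinarith
  refine ⟨η₀, 144 * M ^ 2, hη₀pos, hη₀lt1, by positivity, ?_⟩
  intro y s hs
  -- the dyadic annuli
  set T : ℕ → Set X := fun k => {w | 2 ^ k * s ≤ dist y w ∧ dist y w < 2 ^ (k + 1) * s} with hT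
  -- covers of the annuli
  have hcov : ∀ k : ℕ, ∃ P : Finset X, ↑P ⊆ T k ∧ P.card ≤ N ^ 7 ∧
      T k ⊆ ⋃ p ∈ P, Metric.ball p (2 * (2 ^ k * s / 64)) := by
    intro k
    apply doubling_cover hN 7 y (2 ^ k * s / 64)
    intro w hw
    rw [Metric.mem_ball, dist_comm]
    have h1 : dist y w < 2 ^ (k + 1) * s := hw.2
    have h2 : (2 : ℝ) ^ 7 * (2 ^ k * s / 64) = 2 ^ (k + 1) * s := by
      rw [pow_succ]; ring
    rw [h2]
    exact h1
  choose P hPsub hPcard hPcov using hcov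
  -- potentials from the centres
  choose pot hpotF hpot01 hpoty hpot using rf.pair_potential' hR y
  set G : ℕ → X → ℝ := fun k => ∑ p ∈ P k, pot p with hG
  set cq : ℝ := Real.sqrt 2⁻¹ with hcq
  have hcq0 : 0 ≤ cq := Real.sqrt_nonneg _
  have hcq1 : cq < 1 := by
    rw [hcq, show (1:ℝ) = Real.sqrt 1 from (Real.sqrt_one).symm]
    exact Real.sqrt_lt_sqrt (by norm_num) (by norm_num)
  set a : ℕ → ℝ := fun k => M * (Real.sqrt (2 / s) * cq ^ k) with ha
  have ha0 : ∀ k, 0 ≤ a k := fun k => by positivity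
  -- key facts for each annulus and centre
  have hPfacts : ∀ k : ℕ, ∀ p ∈ P k, p ≠ y ∧ pot p p = 1 ∧
      rf.E (pot p) (pot p) ≤ 2 / (2 ^ k * s) := by
    intro k p hp
    have hpT : p ∈ T k := hPsub k (Finset.mem_coe.2 hp)
    have hd : 2 ^ k * s ≤ dist y p := hpT.1
    have hdp : 0 < dist y p := lt_of_lt_of_le (by positivity) hd
    have hpy : p ≠ y := by
      intro h; rw [h] at hdp; simp at hdp
    obtain ⟨h1, h2⟩ := hpot p hpy
    refine ⟨hpy, h1, h2.trans ?_⟩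
    apply div_le_div_of_nonneg_left (by norm_num) (by positivity) hd
  -- the square-root geometric bound
  have hkey : ∀ k : ℕ, Real.sqrt (2 / (2 ^ k * s)) ≤ Real.sqrt (2 / s) * cq ^ k := by
    intro k
    rw [Real.sqrt_le_iff]
    constructor
    · positivity
    · have hsq : (Real.sqrt (2 / s) * cq ^ k) ^ 2 = (2 / s) * (2⁻¹) ^ k := by
        rw [mul_pow, ← pow_mul, mul_comm k 2, pow_mul, Real.sq_sqrt (by positivity),
          Real.sq_sqrt (by norm_num)]
      rw [hsq, inv_pow]
      apply le_of_eq
      have h2k : (2:ℝ) ^ k ≠ 0 := by positivity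
      field_simp
  -- energy of scale functions
  have hGF : ∀ k, G k ∈ rf.F := fun k =>
    (rf.sum_mem_and_sqrt (P k) pot (fun p _ => hpotF p)).1
  have hGsqrt : ∀ k, Real.sqrt (rf.E (G k) (G k)) ≤ a k := by
    intro k
    have h1 := (rf.sum_mem_and_sqrt (P k) pot (fun p _ => hpotF p)).2
    have h2 : ∀ p ∈ P k, Real.sqrt (rf.E (pot p) (pot p)) ≤ Real.sqrt (2 / (2 ^ k * s)) :=
      fun p hp => Real.sqrt_le_sqrt (hPfacts k p hp).2.2
    calc Real.sqrt (rf.E (G k) (G k)) ≤ ∑ p ∈ P k, Real.sqrt (rf.E (pot p) (pot p)) := h1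
      _ ≤ ∑ _p ∈ P k, Real.sqrt (2 / (2 ^ k * s)) := Finset.sum_le_sum h2
      _ = (P k).card * Real.sqrt (2 / (2 ^ k * s)) := by
          rw [Finset.sum_const, nsmul_eq_mul]
      _ ≤ M * (Real.sqrt (2 / s) * cq ^ k) := by
          have hc : ((P k).card : ℝ) ≤ M := by
            have := hPcard k
            calc ((P k).card : ℝ) ≤ ((N ^ 7 : ℕ) : ℝ) := Nat.cast_le.2 this
              _ = (N : ℝ) ^ 7 := by push_cast; ring
              _ ≤ M := le_max_left _ _
          exact mul_le_mul hc (hkey k) (Real.sqrt_nonneg _) hM0.le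
  have hGy : ∀ k, G k y = 0 := by
    intro k
    rw [hG]
    simp only [Finset.sum_apply]
    exact Finset.sum_eq_zero fun p _ => hpoty p
  have hG0 : ∀ k w, 0 ≤ G k w := by
    intro k w
    rw [hG]
    simp only [Finset.sum_apply]
    exact Finset.sum_nonneg fun p _ => (hpot01 p w).1
  -- summability
  have hsum : Summable a := by
    apply Summable.congr (((summable_geometric_of_lt_one hcq0 hcq1).mul_left
      (M * Real.sqrt (2 / s))))
    intro k
    rw [ha]; ring
  have htsum : ∑' k, a k ≤ 6 * M / Real.sqrt s := by
    have h1 : ∑' k, a k = (M * Real.sqrt (2 / s)) * (1 - cq)⁻¹ := by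
      have h2 : ∑' k, a k = ∑' k, (M * Real.sqrt (2 / s)) * cq ^ k := by
        apply tsum_congr; intro k; rw [ha]; ring
      rw [h2, tsum_mul_left, tsum_geometric_of_lt_one hcq0 hcq1]
    rw [h1]
    have hcq34 : cq ≤ 3 / 4 := by
      rw [hcq, Real.sqrt_le_iff]; norm_num
    have hinv : (1 - cq)⁻¹ ≤ 4 := by
      have h3 : (1:ℝ)/4 ≤ 1 - cq := by linarith
      calc (1 - cq)⁻¹ ≤ ((1:ℝ)/4)⁻¹ := inv_anti₀ (by norm_num) h3
        _ = 4 := by norm_num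
    have hsq2 : Real.sqrt (2 / s) = Real.sqrt 2 / Real.sqrt s := Real.sqrt_div (by norm_num) s
    have hs2 : Real.sqrt 2 ≤ 3 / 2 := by
      rw [Real.sqrt_le_iff]; norm_num
    have hss : 0 < Real.sqrt s := Real.sqrt_pos.2 hs
    calc (M * Real.sqrt (2 / s)) * (1 - cq)⁻¹ ≤ (M * Real.sqrt (2 / s)) * 4 := by
          apply mul_le_mul_of_nonneg_left hinv (by positivity)
      _ = 4 * M * (Real.sqrt 2 / Real.sqrt s) := by rw [hsq2]; ring
      _ ≤ 4 * M * ((3/2) / Real.sqrt s) := by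
          gcongr
      _ = 6 * M / Real.sqrt s := by ring
  -- the limit function
  obtain ⟨Q, hQF, hQy, hQlim, hQsqrt⟩ := rf.sum_limit hR G hGF y hGy a ha0 hGsqrt hsum
  have hQE : rf.E Q Q ≤ 36 * M ^ 2 / s := by
    have h1 : Real.sqrt (rf.E Q Q) ≤ 6 * M / Real.sqrt s := hQsqrt.trans htsum
    have h2 : 0 ≤ rf.E Q Q := rf.nonneg Q hQF
    have hss : 0 < Real.sqrt s := Real.sqrt_pos.2 hs
    have h3 : rf.E Q Q = Real.sqrt (rf.E Q Q) ^ 2 := (Real.sq_sqrt h2).symm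
    rw [h3]
    calc Real.sqrt (rf.E Q Q) ^ 2 ≤ (6 * M / Real.sqrt s) ^ 2 := by
          apply pow_le_pow_left₀ (Real.sqrt_nonneg _) h1
      _ = 36 * M ^ 2 / Real.sqrt s ^ 2 := by rw [div_pow]; ring_nf
      _ = 36 * M ^ 2 / s := by rw [Real.sq_sqrt hs.le]
  -- near bound : Q ≤ 1/4 near y
  have hnear : ∀ w, dist y w ≤ η₀ * s → Q w ≤ 1 / 4 := by
    intro w hw
    have hSn : ∀ n : ℕ, ∑ k ∈ Finset.range n, G k w ≤ 1 / 4 := by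
      intro n
      have hterm : ∀ k : ℕ, G k w ≤ Real.sqrt (η₀ * s) * a k := by
        intro k
        have hp : ∀ p ∈ P k, pot p w ≤ Real.sqrt (η₀ * s) * (Real.sqrt (2 / s) * cq ^ k) := by
          intro p hp
          obtain ⟨hpy, -, hpE⟩ := hPfacts k p hp
          have hh := rf.holder hR (hpotF p) w y
          rw [hpoty p, sub_zero] at hh
          have h1 : (pot p w) ^ 2 ≤ (η₀ * s) * (2 / (2 ^ k * s)) := by
            calc (pot p w) ^ 2 ≤ dist w y * rf.E (pot p) (pot p) := hh
              _ ≤ (η₀ * s) * (2 / (2 ^ k * s)) := by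
                  apply mul_le_mul (by rwa [dist_comm]) hpE (rf.nonneg _ (hpotF p))
                    (by positivity)
          calc pot p w ≤ |pot p w| := le_abs_self _
            _ ≤ Real.sqrt ((η₀ * s) * (2 / (2 ^ k * s))) := Real.abs_le_sqrt h1
            _ = Real.sqrt (η₀ * s) * Real.sqrt (2 / (2 ^ k * s)) := by
                rw [Real.sqrt_mul (by positivity)]
            _ ≤ Real.sqrt (η₀ * s) * (Real.sqrt (2 / s) * cq ^ k) := by
                apply mul_le_mul_of_nonneg_left (hkey k) (Real.sqrt_nonneg _)
        have hb : 0 ≤ Real.sqrt (η₀ * s) * (Real.sqrt (2 / s) * cq ^ k) := by positivity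
        calc G k w = ∑ p ∈ P k, pot p w := by rw [hG]; simp [Finset.sum_apply]
          _ ≤ (P k).card • (Real.sqrt (η₀ * s) * (Real.sqrt (2 / s) * cq ^ k)) :=
              Finset.sum_le_card_nsmul _ _ _ hp
          _ = ((P k).card : ℝ) * (Real.sqrt (η₀ * s) * (Real.sqrt (2 / s) * cq ^ k)) := by
              rw [nsmul_eq_mul]
          _ ≤ M * (Real.sqrt (η₀ * s) * (Real.sqrt (2 / s) * cq ^ k)) := by
              apply mul_le_mul_of_nonneg_right _ hb
              have := hPcard k
              calc ((P k).card : ℝ) ≤ ((N ^ 7 : ℕ) : ℝ) := Nat.cast_le.2 this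
                _ = (N : ℝ) ^ 7 := by push_cast; ring
                _ ≤ M := le_max_left _ _
          _ = Real.sqrt (η₀ * s) * a k := by rw [ha]; ring
      calc ∑ k ∈ Finset.range n, G k w ≤ ∑ k ∈ Finset.range n, Real.sqrt (η₀ * s) * a k :=
            Finset.sum_le_sum fun k _ => hterm k
        _ = Real.sqrt (η₀ * s) * ∑ k ∈ Finset.range n, a k := by rw [Finset.mul_sum]
        _ ≤ Real.sqrt (η₀ * s) * ∑' k, a k := by
            apply mul_le_mul_of_nonneg_left (Summable.sum_le_tsum _ (fun k _ => ha0 k) hsum)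
              (Real.sqrt_nonneg _)
        _ ≤ Real.sqrt (η₀ * s) * (6 * M / Real.sqrt s) := by
            apply mul_le_mul_of_nonneg_left htsum (Real.sqrt_nonneg _)
        _ = 1 / 4 := by
            rw [Real.sqrt_mul hη₀pos.le, hη₀, Real.sqrt_sq (by positivity)]
            have hss : Real.sqrt s ≠ 0 := ne_of_gt (Real.sqrt_pos.2 hs)
            field_simp
            ring
    exact le_of_tendsto (hQlim w) (Filter.Eventually.of_forall hSn)
  -- far bound : Q ≥ 3/4 far from y
  have hfar : ∀ w, s ≤ dist y w → 3 / 4 ≤ Q w := by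
    intro w hw
    obtain ⟨k, hk1, hk2⟩ := exists_dyadic hs hw
    have hwT : w ∈ T k := ⟨hk1, hk2⟩
    obtain ⟨p, hpP, hpball⟩ := by
      simpa only [Set.mem_iUnion, exists_prop] using hPcov k hwT
    obtain ⟨hpy, hpp, hpE⟩ := hPfacts k p hpP
    have hdwp : dist w p < 2 ^ k * s / 32 := by
      have := Metric.mem_ball.1 hpball
      calc dist w p < 2 * (2 ^ k * s / 64) := this
        _ = 2 ^ k * s / 32 := by ring
    have hh := rf.holder hR (hpotF p) w p
    rw [hpp] at hh
    have h1 : (pot p w - 1) ^ 2 ≤ 1 / 16 := by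
      calc (pot p w - 1) ^ 2 ≤ dist w p * rf.E (pot p) (pot p) := hh
        _ ≤ (2 ^ k * s / 32) * (2 / (2 ^ k * s)) := by
            apply mul_le_mul hdwp.le hpE (rf.nonneg _ (hpotF p)) (by positivity)
        _ = 1 / 16 := by
            have h2k : (2:ℝ) ^ k * s ≠ 0 := by positivity
            field_simp
            ring
    have h2 : |pot p w - 1| ≤ 1 / 4 := by
      have := Real.abs_le_sqrt h1
      rwa [show Real.sqrt (1/16 : ℝ) = 1/4 by
        rw [show (1/16:ℝ) = (1/4)^2 by norm_num, Real.sqrt_sq (by norm_num)]] at this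
    have h3 : 3 / 4 ≤ pot p w := by
      have := (abs_le.1 h2).1
      linarith
    have h4 : 3 / 4 ≤ G k w := by
      calc (3:ℝ) / 4 ≤ pot p w := h3
        _ ≤ ∑ p' ∈ P k, pot p' w := Finset.single_le_sum (fun p' _ => (hpot01 p' w).1) hpP
        _ = G k w := by rw [hG]; simp [Finset.sum_apply]
    have h5 : ∀ n ≥ k + 1, 3 / 4 ≤ ∑ i ∈ Finset.range n, G i w := by
      intro n hn
      calc (3:ℝ) / 4 ≤ G k w := h4
        _ ≤ ∑ i ∈ Finset.range n, G i w :=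
            Finset.single_le_sum (fun i _ => hG0 i w) (Finset.mem_range.2 hn)
    exact ge_of_tendsto (hQlim w) (Filter.eventually_atTop.2 ⟨k + 1, h5⟩)
  -- the cutoff
  set u : X → ℝ := ((-2 : ℝ) • Q) + (fun _ => (3:ℝ)/2) with hu
  have huF : u ∈ rf.F := rf.add_mem (rf.smul_mem _ hQF) (rf.const_mem _)
  have huw : ∀ w, u w = 3/2 - 2 * Q w := by
    intro w
    rw [hu]
    simp only [Pi.add_apply, Pi.smul_apply, smul_eq_mul]
    ring
  obtain ⟨hψF, hψE⟩ := rf.markov u huF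
  refine ⟨fun w => max 0 (min 1 (u w)), hψF, ?_, ?_, ?_, ?_⟩
  · intro w
    constructor
    · exact le_max_left _ _
    · simp only [max_le_iff]
      exact ⟨zero_le_one, min_le_left _ _⟩
  · intro w hw
    have h1 : Q w ≤ 1/4 := hnear w hw
    have h2 : 1 ≤ u w := by rw [huw]; linarith
    have hgoal : max 0 (min 1 (u w)) = 1 := by
      rw [min_eq_left h2, max_eq_right zero_le_one]
    exact hgoal
  · intro w hw
    have h1 : 3/4 ≤ Q w := hfar w hw
    have h2 : u w ≤ 0 := by rw [huw]; linarith
    have hgoal : max 0 (min 1 (u w)) = 0 := by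
      rw [min_eq_right (h2.trans zero_le_one), max_eq_left h2]
    exact hgoal
  · have hEu : rf.E u u = 4 * rf.E Q Q := by
      rw [hu, rf.E_add_const (rf.smul_mem _ hQF), rf.E_smul_self _ hQF]
      ring
    calc rf.E _ _ ≤ rf.E u u := hψE
      _ = 4 * rf.E Q Q := hEu
      _ ≤ 4 * (36 * M ^ 2 / s) := by linarith [hQE]
      _ = 144 * M ^ 2 / s := by ring

end ResistanceForm

end Aux5

/-- Under the standing assumptions, for every `η ∈ (0,1)` there is
`C > 0` with `C⁻¹ r ≤ 𝓡(cl B(x,ηr), B(x,r)ᶜ) ≤ C r` for all `x ∈ X` and `r > 0` with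
`B(x,r) ≠ X`. -/
theorem setRes_ball_annulus_comparable {X : Type*} [MetricSpace X] [CompleteSpace X]
    (rf : ResistanceForm X) (hR : ∀ x y : X, dist x y = rf.rmetric x y)
    (hdb : DoublingOf fun x y : X => dist x y)
    (hup : UniformlyPerfectOf fun x y : X => dist x y)
    (η : ℝ) (hη0 : 0 < η) (hη1 : η < 1) :
    ∃ C : ℝ, 0 < C ∧ ∀ (x : X) (r : ℝ), 0 < r → Metric.ball x r ≠ Set.univ →
      ENNReal.ofReal (C⁻¹ * r) ≤
          rf.setRes (closure (Metric.ball x (η * r))) (Metric.ball x r)ᶜ ∧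
      rf.setRes (closure (Metric.ball x (η * r))) (Metric.ball x r)ᶜ ≤
          ENNReal.ofReal (C * r) := by
  classical
  obtain ⟨N, hN⟩ := hdb
  obtain ⟨γ, hγ1, hγ⟩ := hup
  obtain ⟨η₀, C₀, hη₀pos, hη₀lt1, hC₀pos, hcut⟩ := rf.exists_cutoff hR hN
  obtain ⟨m, hm⟩ := pow_unbounded_of_one_lt (4 / (η₀ * (1 - η))) (by norm_num : (1:ℝ) < 2)
  set M₂ : ℝ := max ((N : ℝ) ^ m) 1 with hM₂
  have hM₂1 : 1 ≤ M₂ := le_max_right _ _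
  have hM₂0 : 0 < M₂ := lt_of_lt_of_le one_pos hM₂1
  set C₁ : ℝ := 2 * M₂ ^ 2 * C₀ / (1 - η) with hC₁
  have hC₁pos : 0 < C₁ := by
    rw [hC₁]
    have : (0:ℝ) < 1 - η := by linarith
    positivity
  set C : ℝ := max γ C₁ with hC
  have hCpos : 0 < C := lt_of_lt_of_le (lt_trans one_pos hγ1) (le_max_left _ _)
  refine ⟨C, hCpos, fun x r hr hball => ?_⟩
  have h1η : (0:ℝ) < 1 - η := by linarith
  set s : ℝ := (1 - η) * r / 2 with hsdef
  have hs : 0 < s := by rw [hsdef]; positivity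
  set A : Set X := closure (Metric.ball x (η * r)) with hA
  set B : Set X := (Metric.ball x r)ᶜ with hB
  have hAne : A.Nonempty := ⟨x, subset_closure (Metric.mem_ball_self (by positivity))⟩
  have hBne : B.Nonempty := Set.nonempty_compl.2 hball
  -- points of A are within η r of x
  have hAclose : ∀ w ∈ A, dist w x ≤ η * r := by
    intro w hw
    exact Metric.mem_closedBall.1 (Metric.closure_ball_subset_closedBall hw)
  -- construct the admissible cutoff function φ
  set ρ : ℝ := η₀ * s / 2 with hρ
  have hTsub : A ⊆ Metric.ball x (2 ^ m * ρ) := by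
    intro w hw
    rw [Metric.mem_ball]
    have h1 : dist w x ≤ η * r := hAclose w hw
    have h2 : r < 2 ^ m * ρ := by
      rw [hρ, hsdef]
      have h3 : 4 / (η₀ * (1 - η)) < 2 ^ m := hm
      have h4 : (0:ℝ) < η₀ * (1 - η) := by positivity
      rw [div_lt_iff₀ h4] at h3
      nlinarith
    calc dist w x ≤ η * r := h1
      _ < r := by nlinarith
      _ < 2 ^ m * ρ := h2
  obtain ⟨P, hPsub, hPcard, hPcov⟩ := doubling_cover hN m x ρ A hTsub
  choose ψ hψF hψ01 hψ1 hψ0 hψE using fun p : X => hcut p s hs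
  set Φ : X → ℝ := ∑ p ∈ P, ψ p with hΦ
  have hΦF : Φ ∈ rf.F := (rf.sum_mem_and_sqrt P ψ (fun p _ => hψF p)).1
  have hΦE : rf.E Φ Φ ≤ C₁ / r := by
    have h1 : Real.sqrt (rf.E Φ Φ) ≤ M₂ * Real.sqrt (C₀ / s) := by
      calc Real.sqrt (rf.E Φ Φ) ≤ ∑ p ∈ P, Real.sqrt (rf.E (ψ p) (ψ p)) :=
            (rf.sum_mem_and_sqrt P ψ (fun p _ => hψF p)).2
        _ ≤ ∑ _p ∈ P, Real.sqrt (C₀ / s) :=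
            Finset.sum_le_sum fun p _ => Real.sqrt_le_sqrt (hψE p)
        _ = (P.card : ℝ) * Real.sqrt (C₀ / s) := by rw [Finset.sum_const, nsmul_eq_mul]
        _ ≤ M₂ * Real.sqrt (C₀ / s) := by
            apply mul_le_mul_of_nonneg_right _ (Real.sqrt_nonneg _)
            calc (P.card : ℝ) ≤ ((N ^ m : ℕ) : ℝ) := Nat.cast_le.2 hPcard
              _ = (N : ℝ) ^ m := by push_cast; ring
              _ ≤ M₂ := le_max_left _ _
    have h2 : rf.E Φ Φ = Real.sqrt (rf.E Φ Φ) ^ 2 := (Real.sq_sqrt (rf.nonneg Φ hΦF)).symm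
    rw [h2]
    calc Real.sqrt (rf.E Φ Φ) ^ 2 ≤ (M₂ * Real.sqrt (C₀ / s)) ^ 2 :=
          pow_le_pow_left₀ (Real.sqrt_nonneg _) h1 2
      _ = M₂ ^ 2 * (C₀ / s) := by
          rw [mul_pow, Real.sq_sqrt (by positivity : (0:ℝ) ≤ C₀ / s)]
      _ = C₁ / r := by
          rw [hC₁, hsdef]
          field_simp
  obtain ⟨hφF, hφE⟩ := rf.markov Φ hΦF
  set φ : X → ℝ := fun w => max 0 (min 1 (Φ w)) with hφ
  have hφ1 : ∀ w ∈ A, φ w = 1 := by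
    intro w hw
    obtain ⟨p, hpP, hpball⟩ := by
      simpa only [Set.mem_iUnion, exists_prop] using hPcov hw
    have hdist : dist p w ≤ η₀ * s := by
      have h1 : dist w p < 2 * ρ := Metric.mem_ball.1 hpball
      rw [hρ] at h1
      rw [dist_comm]
      linarith
    have h1 : ψ p w = 1 := hψ1 p w hdist
    have h2 : 1 ≤ Φ w := by
      calc (1:ℝ) = ψ p w := h1.symm
        _ ≤ ∑ p' ∈ P, ψ p' w := Finset.single_le_sum (fun p' _ => (hψ01 p' w).1) hpP
        _ = Φ w := by rw [hΦ]; simp [Finset.sum_apply]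
    rw [hφ]
    have hgoal : max 0 (min 1 (Φ w)) = 1 := by
      rw [min_eq_left h2, max_eq_right zero_le_one]
    exact hgoal
  have hφ0 : ∀ w ∈ B, φ w = 0 := by
    intro w hw
    have hwx : r ≤ dist w x := by
      rw [hB, Set.mem_compl_iff, Metric.mem_ball, not_lt] at hw
      exact hw
    have hzero : ∀ p ∈ P, ψ p w = 0 := by
      intro p hpP
      apply hψ0 p w
      have hpA : p ∈ A := hPsub (Finset.mem_coe.2 hpP)
      have h1 : dist p x ≤ η * r := hAclose p hpA
      have h2 : dist w x ≤ dist w p + dist p x := dist_triangle _ _ _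
      rw [dist_comm p w]
      rw [hsdef]
      linarith
    have hΦ0 : Φ w = 0 := by
      rw [hΦ]
      simp only [Finset.sum_apply]
      exact Finset.sum_eq_zero hzero
    rw [hφ]
    have hgoal : max 0 (min 1 (Φ w)) = 0 := by
      rw [hΦ0]
      norm_num
    exact hgoal
  have hφE' : rf.E φ φ ≤ C₁ / r := le_trans hφE hΦE
  -- the admissible energy set
  set ES : Set ℝ :=
    {e : ℝ | ∃ u ∈ rf.F, (∀ z ∈ A, u z = 1) ∧ (∀ z ∈ B, u z = 0) ∧ rf.E u u = e} with hES
  have hex : ∃ u ∈ rf.F, (∀ z ∈ A, u z = 1) ∧ (∀ z ∈ B, u z = 0) := ⟨φ, hφF, hφ1, hφ0⟩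
  have hEmem : rf.E φ φ ∈ ES := ⟨φ, hφF, hφ1, hφ0, rfl⟩
  have hESne : ES.Nonempty := ⟨_, hEmem⟩
  have hESbdd : BddBelow ES := by
    refine ⟨0, fun e he => ?_⟩
    obtain ⟨u, hu, -, -, hE⟩ := he
    exact hE ▸ rf.nonneg u hu
  have hsInf_le : sInf ES ≤ C₁ / r := le_trans (csInf_le hESbdd hEmem) hφE'
  have hsInf_0 : 0 ≤ sInf ES := le_csInf hESne fun e he => by
    obtain ⟨u, hu, -, -, hE⟩ := he
    exact hE ▸ rf.nonneg u hu
  -- the uniformly perfect point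
  have hballset : {y : X | dist x y < r} = Metric.ball x r := by
    ext y; rw [Set.mem_setOf_eq, Metric.mem_ball, dist_comm]
  obtain ⟨b, hb1, hb2⟩ := hγ x r hr (by rw [hballset]; exact hball)
  have hb1' : dist x b < γ * r := hb1
  have hb2' : r ≤ dist x b := not_lt.1 hb2
  have hxb : x ≠ b := by
    intro h
    rw [h] at hb2'
    simp at hb2'
    linarith
  have hbB : b ∈ B := by
    rw [hB, Set.mem_compl_iff, Metric.mem_ball, not_lt, dist_comm]
    exact hb2'
  have hxA : x ∈ A := subset_closure (Metric.mem_ball_self (by positivity))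
  -- lower bound on every admissible energy
  have hlb : ∀ e ∈ ES, sInf (rf.pairSet x b) ≤ e := by
    intro e he
    obtain ⟨u, hu, h1, h0, hE⟩ := he
    exact csInf_le (rf.pairSet_bddBelow x b) ⟨u, hu, h1 x hxA, h0 b hbB, hE⟩
  have hm₀ : sInf (rf.pairSet x b) = (dist x b)⁻¹ := rf.sInf_pairSet_eq hR hxb
  have hdxb : 0 < dist x b := lt_of_lt_of_le hr hb2'
  have hsInf_ge : (dist x b)⁻¹ ≤ sInf ES := hm₀ ▸ le_csInf hESne hlb
  -- unfold setRes
  rw [ResistanceForm.setRes, if_pos ⟨hAne, hBne⟩, if_pos hex]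
  constructor
  · -- lower bound
    have h1 : ENNReal.ofReal (sInf ES) ≤ ENNReal.ofReal (C₁ / r) :=
      ENNReal.ofReal_le_ofReal hsInf_le
    have h2 : (ENNReal.ofReal (C₁ / r))⁻¹ ≤ (ENNReal.ofReal (sInf ES))⁻¹ :=
      ENNReal.inv_le_inv.2 h1
    have h3 : (ENNReal.ofReal (C₁ / r))⁻¹ = ENNReal.ofReal (r / C₁) := by
      rw [← ENNReal.ofReal_inv_of_pos (by positivity : (0:ℝ) < C₁ / r), inv_div]
    have h4 : ENNReal.ofReal (C⁻¹ * r) ≤ ENNReal.ofReal (r / C₁) := by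
      apply ENNReal.ofReal_le_ofReal
      have h5 : C₁ ≤ C := le_max_right _ _
      have h6 : C⁻¹ ≤ C₁⁻¹ := inv_anti₀ hC₁pos h5
      calc C⁻¹ * r ≤ C₁⁻¹ * r := mul_le_mul_of_nonneg_right h6 hr.le
        _ = r / C₁ := by rw [div_eq_mul_inv]; ring
    calc ENNReal.ofReal (C⁻¹ * r) ≤ ENNReal.ofReal (r / C₁) := h4
      _ = (ENNReal.ofReal (C₁ / r))⁻¹ := h3.symm
      _ ≤ (ENNReal.ofReal (sInf ES))⁻¹ := h2
  · -- upper bound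
    have h1 : ENNReal.ofReal ((dist x b)⁻¹) ≤ ENNReal.ofReal (sInf ES) :=
      ENNReal.ofReal_le_ofReal hsInf_ge
    have h2 : (ENNReal.ofReal (sInf ES))⁻¹ ≤ (ENNReal.ofReal ((dist x b)⁻¹))⁻¹ :=
      ENNReal.inv_le_inv.2 h1
    have h3 : (ENNReal.ofReal ((dist x b)⁻¹))⁻¹ = ENNReal.ofReal (dist x b) := by
      rw [← ENNReal.ofReal_inv_of_pos (by positivity : (0:ℝ) < (dist x b)⁻¹), inv_inv]
    have h4 : ENNReal.ofReal (dist x b) ≤ ENNReal.ofReal (C * r) := by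
      apply ENNReal.ofReal_le_ofReal
      have h5 : γ ≤ C := le_max_left _ _
      calc dist x b ≤ γ * r := hb1'.le
        _ ≤ C * r := mul_le_mul_of_nonneg_right h5 hr.le
    calc (ENNReal.ofReal (sInf ES))⁻¹ ≤ (ENNReal.ofReal ((dist x b)⁻¹))⁻¹ := h2
      _ = ENNReal.ofReal (dist x b) := h3
      _ ≤ ENNReal.ofReal (C * r) := h4
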